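/- arXiv:2411.13336 — 3 statements merged into one kernel-verified Lean document; each statement's English description precedes it below -/
import Mathlib

section
/- Let X, Y be compact metric spaces and (F_n) a sequence of upper semicontinuous set-valued functions F_n : X → (nonempty closed subsets of Y) satisfying: (1) F_{n+1}(x) ⊆ F_n(x) for all n, x; (2) diam(F_n(x)) → 0 for all x; (3) ⋃_{x ∈ X} F_n(x) = Y for all n. Then the map f : X → Y defined by {f(x)} = ⋂_n F_n(x) is continuous and surjective. -/
/-- `F` is upper semicontinuous as a set-valued map. -/
def UpperSemicontinuousSetValued {X Y : Type*} [TopologicalSpace X] [TopologicalSpace Y]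
    (F : X → Set Y) : Prop :=
  ∀ x : X, ∀ V : Set Y, IsOpen V → F x ⊆ V →
    ∃ U : Set X, IsOpen U ∧ x ∈ U ∧ ∀ u ∈ U, F u ⊆ V

theorem nadler_usc_limit_continuous_surjective
    {X Y : Type*} [MetricSpace X] [CompactSpace X] [MetricSpace Y] [CompactSpace Y]
    (F : ℕ → X → Set Y)
    (husc : ∀ n, UpperSemicontinuousSetValued (F n))
    (hne : ∀ n x, (F n x).Nonempty)
    (hcl : ∀ n x, IsClosed (F n x))
    (hnest : ∀ n x, F (n + 1) x ⊆ F n x)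
    (hdiam : ∀ x, Filter.Tendsto (fun n => Metric.diam (F n x)) Filter.atTop (nhds 0))
    (hcover : ∀ n, (⋃ x : X, F n x) = Set.univ) :
    ∃ f : X → Y, Continuous f ∧ Function.Surjective f ∧ ∀ x, (⋂ n, F n x) = {f x} := by
  have hanti : ∀ x, Antitone fun n => F n x := fun x =>
    antitone_nat_of_succ_le fun n => hnest n x
  have hiInter : ∀ x, (⋂ n, F n x).Nonempty := fun x =>
    IsCompact.nonempty_iInter_of_sequence_nonempty_isCompact_isClosed _
      (fun n => hnest n x) (fun n => hne n x) ((hcl 0 x).isCompact) (fun n => hcl n x)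
  choose f hf using hiInter
  have hfmem : ∀ x n, f x ∈ F n x := fun x n => Set.mem_iInter.1 (hf x) n
  have huniq : ∀ x y, (∀ n, y ∈ F n x) → y = f x := by
    intro x y hy
    have hb : ∀ n, dist y (f x) ≤ Metric.diam (F n x) := fun n =>
      Metric.dist_le_diam_of_mem (isCompact_univ.isBounded.subset (Set.subset_univ _))
        (hy n) (hfmem x n)
    have h0 : dist y (f x) ≤ 0 := ge_of_tendsto (hdiam x) (Filter.Eventually.of_forall hb)
    exact dist_le_zero.1 h0
  refine ⟨f, ?_, ?_, ?_⟩
  · rw [Metric.continuous_iff]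
    intro x ε hε
    obtain ⟨n, hn⟩ := ((hdiam x).eventually (gt_mem_nhds hε)).exists
    obtain ⟨U, hUo, hxU, hU⟩ := husc n x (Metric.ball (f x) ε) Metric.isOpen_ball
      (fun z hz => Metric.mem_ball.2 (lt_of_le_of_lt
        (Metric.dist_le_diam_of_mem (isCompact_univ.isBounded.subset (Set.subset_univ _))
          hz (hfmem x n)) hn))
    obtain ⟨δ, hδ, hball⟩ := Metric.isOpen_iff.1 hUo x hxU
    exact ⟨δ, hδ, fun a ha => hU a (hball (Metric.mem_ball.2 ha)) (hfmem a n)⟩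
  · intro y
    have hxn : ∀ n, ∃ x, y ∈ F n x := by
      intro n
      have : y ∈ ⋃ x : X, F n x := by rw [hcover n]; trivial
      simpa using this
    choose u hu using hxn
    obtain ⟨x, -, φ, hφ, hlim⟩ := isCompact_univ.tendsto_subseq (fun n => Set.mem_univ (u n))
    refine ⟨x, (huniq x y ?_).symm⟩
    intro m
    by_contra hy
    have hne' := hne m x
    have hpos : 0 < Metric.infDist y (F m x) :=
      (IsClosed.notMem_iff_infDist_pos (hcl m x) hne').1 hy
    set r := Metric.infDist y (F m x) with hr
    have hV : F m x ⊆ (Metric.closedBall y (r / 2))ᶜ := by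
      intro z hz
      simp only [Set.mem_compl_iff, Metric.mem_closedBall, not_le]
      have : r ≤ dist y z := Metric.infDist_le_dist_of_mem hz
      rw [dist_comm] at this
      linarith
    obtain ⟨U, hUo, hxU, hU⟩ := husc m x _ (Metric.isClosed_closedBall.isOpen_compl) hV
    have hev : ∀ᶠ k in Filter.atTop, u (φ k) ∈ U :=
      hlim (hUo.mem_nhds hxU)
    obtain ⟨k, hkU, hkm⟩ := (hev.and (Filter.eventually_ge_atTop m)).exists
    have hφk : m ≤ φ k := le_trans hkm (hφ.le_apply)
    have : y ∈ F m (u (φ k)) := hanti (u (φ k)) hφk (hu (φ k))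
    have : y ∈ (Metric.closedBall y (r / 2))ᶜ := hU _ hkU this
    exact this (Metric.mem_closedBall_self (by linarith))
  · intro x
    ext y
    simp only [Set.mem_iInter, Set.mem_singleton_iff]
    exact ⟨fun h => huniq x y h, fun h n => h ▸ hfmem x n⟩
end

section
/- Let G_0 ← G_1 ← ... be an inverse sequence of finite directed graphs with +directional, edge-surjective bonding maps, where every vertex of every G_i has at least one outgoing edge. Define V_G as the inverse limit of vertex sets and E_G = {(x,y) ∈ V_G × V_G : (x_i, y_i) ∈ E_i for all i}. Then E_G is the graph of a function, i.e., for every x ∈ V_G there exists a unique y ∈ V_G with (x,y) ∈ E_G. -/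
/-- `φ` is a graph homomorphism from `(V, E)` to `(V', E')`. -/
def IsGraphHom {V V' : Type*} (E : V → V → Prop) (E' : V' → V' → Prop) (φ : V → V') : Prop :=
  ∀ u v, E u v → E' (φ u) (φ v)

/-- `φ` is edge-surjective. -/
def IsEdgeSurjective {V V' : Type*} (E : V → V → Prop) (E' : V' → V' → Prop) (φ : V → V') : Prop :=
  ∀ u' v', E' u' v' → ∃ u v, E u v ∧ φ u = u' ∧ φ v = v'

/-- `φ` is +directional. -/
def IsPlusDirectional {V V' : Type*} (E : V → V → Prop) (φ : V → V') : Prop :=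
  ∀ u v v', E u v → E u v' → φ v = φ v'

/-- `φ` is a cover. -/
def IsGraphCover {V V' : Type*} (E : V → V → Prop) (E' : V' → V' → Prop) (φ : V → V') : Prop :=
  IsGraphHom E E' φ ∧ IsEdgeSurjective E E' φ ∧ IsPlusDirectional E φ

theorem inverse_limit_relation_is_function
    (V : ℕ → Type*) [∀ i, Fintype (V i)]
    (E : ∀ i, V i → V i → Prop)
    (φ : ∀ i, V (i + 1) → V i)
    (hcover : ∀ i, IsGraphCover (E (i + 1)) (E i) (φ i))
    (hout : ∀ i (v : V i), ∃ w : V i, E i v w)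
    (x : {x : ∀ i, V i // ∀ i, x i = φ i (x (i + 1))}) :
    ∃! y : {x : ∀ i, V i // ∀ i, x i = φ i (x (i + 1))},
      ∀ i, E i (x.1 i) (y.1 i) := by
  classical
  -- chosen successor at each level
  set w : ∀ i, V i := fun i => Classical.choose (hout i (x.1 i)) with hw
  have hwE : ∀ i, E i (x.1 i) (w i) := fun i => Classical.choose_spec (hout i (x.1 i))
  -- define y i as projection of the chosen successor one level up
  set y : ∀ i, V i := fun i => φ i (w (i + 1)) with hy
  have hyE : ∀ i, E i (x.1 i) (y i) := by
    intro i
    have := (hcover i).1 _ _ (hwE (i + 1))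
    rwa [← x.2 i] at this
  have hycompat : ∀ i, y i = φ i (y (i + 1)) := by
    intro i
    exact (hcover i).2.2 (x.1 (i + 1)) _ _ (hwE (i + 1)) (hyE (i + 1))
  refine ⟨⟨y, hycompat⟩, hyE, ?_⟩
  rintro ⟨z, hz⟩ hzE
  ext i
  have h1 : φ i (z (i + 1)) = φ i (y (i + 1)) :=
    (hcover i).2.2 (x.1 (i + 1)) _ _ (hzE (i + 1)) (hyE (i + 1))
  simpa [hz i, hycompat i] using h1
end

section
/- Let (C, f) be a surjective Cantor dynamical system and (U_i) a sequence of finite clopen partitions of C with U_{i+1} refining f⁻¹(U_i) ∨ U_i and mesh(U_i) → 0 (U_0 = {C}). Let V_U be the inverse limit of the graphs (U_i, f^{U_i}) under the inclusion-induced bonding maps, and E_U the induced relation. Then the map h : C → V_U sending x to the sequence (U_i(x)) of partition elements containing x is a homeomorphism conjugating f with the map determined by E_U, i.e., (V_U, E_U) is topologically conjugate to (C, f). -/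
/-- A copy of `α` carrying the discrete topology. -/
def Disc (α : Type*) : Type _ := α

/-- The underlying element of `α` of a point of `Disc α`. -/
def Disc.out {α : Type*} (a : Disc α) : α := a

instance {α : Type*} : TopologicalSpace (Disc α) := ⊥

instance {α : Type*} : DiscreteTopology (Disc α) := ⟨rfl⟩

/-- `𝒰` is a finite partition of the whole space into nonempty clopen sets. -/
def IsClopenPartition {C : Type*} [TopologicalSpace C] (𝒰 : Set (Set C)) : Prop :=
  𝒰.Finite ∧ (∀ A ∈ 𝒰, A.Nonempty) ∧ (∀ A ∈ 𝒰, IsClopen A) ∧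
    (∀ A ∈ 𝒰, ∀ B ∈ 𝒰, A ≠ B → Disjoint A B) ∧ ⋃₀ 𝒰 = Set.univ

theorem inverse_limit_of_partitions_conjugate
    {C : Type*} [MetricSpace C] [CompactSpace C]
    (f : C → C) (hf : Continuous f) (hsurj : Function.Surjective f)
    (𝒰 : ℕ → Set (Set C))
    (h0 : 𝒰 0 = {Set.univ})
    (hpart : ∀ i, IsClopenPartition (𝒰 i))
    (href : ∀ i, ∀ A ∈ 𝒰 (i + 1), ∃ B ∈ 𝒰 i, ∃ B' ∈ 𝒰 i, A ⊆ f ⁻¹' B ∩ B')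
    (hmesh : ∀ ε > (0 : ℝ), ∃ N : ℕ, ∀ i ≥ N, ∀ A ∈ 𝒰 i, Metric.diam A < ε) :
    ∃ h : C ≃ₜ {x : ℕ → Disc (Set C) //
        (∀ i, (x i).out ∈ 𝒰 i) ∧ ∀ i, (x (i + 1)).out ⊆ (x i).out},
      (∀ (x : C) (i : ℕ), x ∈ ((h x).1 i).out) ∧
      ∀ y z : {x : ℕ → Disc (Set C) //
          (∀ i, (x i).out ∈ 𝒰 i) ∧ ∀ i, (x (i + 1)).out ⊆ (x i).out},
        ((∀ i, ((f '' (y.1 i).out) ∩ (z.1 i).out).Nonempty) ↔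
          z = h (f (h.symm y))) := by
  classical
  -- existence of a partition element containing any point
  have exu : ∀ i (x : C), ∃ A, A ∈ 𝒰 i ∧ x ∈ A := by
    intro i x
    have hx : x ∈ ⋃₀ 𝒰 i := by rw [(hpart i).2.2.2.2]; exact Set.mem_univ x
    obtain ⟨A, hA, hxA⟩ := hx
    exact ⟨A, hA, hxA⟩
  let u : ℕ → C → Set C := fun i x => (exu i x).choose
  have uA : ∀ i x, u i x ∈ 𝒰 i := fun i x => (exu i x).choose_spec.1
  have ux : ∀ i x, x ∈ u i x := fun i x => (exu i x).choose_spec.2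
  have uniq : ∀ i (x : C) A, A ∈ 𝒰 i → x ∈ A → u i x = A := by
    intro i x A hA hxA
    by_contra hne
    exact Set.disjoint_left.mp ((hpart i).2.2.2.1 _ (uA i x) _ hA hne) (ux i x) hxA
  have nested : ∀ i (x : C), u (i + 1) x ⊆ u i x := by
    intro i x
    obtain ⟨B, hB, B', hB', hsub⟩ := href i (u (i + 1) x) (uA (i + 1) x)
    have hxB' : x ∈ B' := (hsub (ux (i + 1) x)).2
    rw [uniq i x B' hB' hxB']
    exact fun w hw => (hsub hw).2
  have hbdd : ∀ (s : Set C), Bornology.IsBounded s := fun s =>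
    (isCompact_univ.isBounded).subset (Set.subset_univ s)
  -- the map H
  let H : C → {x : ℕ → Disc (Set C) //
      (∀ i, (x i).out ∈ 𝒰 i) ∧ ∀ i, (x (i + 1)).out ⊆ (x i).out} :=
    fun x => ⟨fun i => u i x, fun i => uA i x, fun i => nested i x⟩
  have Hinj : Function.Injective H := by
    intro x y hxy
    have key : ∀ i, u i x = u i y := fun i =>
      congrFun (congrArg Subtype.val hxy) i
    by_contra hne
    obtain ⟨N, hN⟩ := hmesh (dist x y) (dist_pos.mpr hne)
    have h1 : y ∈ u N x := by rw [key N]; exact ux N y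
    have := Metric.dist_le_diam_of_mem (hbdd _) (ux N x) h1
    exact absurd (lt_of_le_of_lt this (hN N le_rfl _ (uA N x))) (lt_irrefl _)
  have Hsurj : Function.Surjective H := by
    intro z
    have hne : (⋂ i, (z.1 i).out).Nonempty := by
      apply IsCompact.nonempty_iInter_of_sequence_nonempty_isCompact_isClosed
      · exact z.2.2
      · exact fun i => (hpart i).2.1 _ (z.2.1 i)
      · exact (((hpart 0).2.2.1 _ (z.2.1 0)).isClosed).isCompact
      · exact fun i => ((hpart i).2.2.1 _ (z.2.1 i)).isClosed
    obtain ⟨x, hx⟩ := hne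
    refine ⟨x, Subtype.ext (funext fun i => ?_)⟩
    exact uniq i x _ (z.2.1 i) (Set.mem_iInter.mp hx i)
  have Hcont : Continuous H := by
    apply Continuous.subtype_mk
    refine @continuous_pi C ℕ (fun _ => Disc (Set C)) _
      (fun _ => instTopologicalSpaceDisc) _ (fun i => ?_)
    apply IsLocallyConstant.continuous
    refine (IsLocallyConstant.iff_exists_open _).mpr ?_
    intro x
    refine ⟨u i x, ((hpart i).2.2.1 _ (uA i x)).isOpen, ux i x, fun y hy => ?_⟩
    exact uniq i y _ (uA i x) hy
  let e : C ≃ _ := Equiv.ofBijective H ⟨Hinj, Hsurj⟩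
  let h := Continuous.homeoOfEquivCompactToT2 (f := e) Hcont
  refine ⟨h, fun x i => ux i x, ?_⟩
  intro y z
  set x := h.symm y with hxdef
  have hxy : h x = y := h.apply_symm_apply y
  have hy : ∀ i, (y.1 i).out = u i x := fun i => by rw [← hxy]; rfl
  have zanti : Antitone (fun i => (z.1 i).out) := antitone_nat_of_succ_le z.2.2
  constructor
  · intro hne
    have hfx : ∀ i, f x ∈ (z.1 i).out := by
      intro i
      have hclosed := ((hpart i).2.2.1 _ (z.2.1 i)).isClosed
      rw [← hclosed.closure_eq, Metric.mem_closure_iff]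
      intro ε hε
      obtain ⟨δ, hδ, hδε⟩ := Metric.continuous_iff.mp hf x ε hε
      obtain ⟨N, hN⟩ := hmesh δ hδ
      obtain ⟨p, ⟨w, hw, rfl⟩, hpz⟩ := hne (max N i)
      have hwx : dist w x < δ := by
        have h1 : w ∈ u (max N i) x := by rw [← hy]; exact hw
        exact lt_of_le_of_lt (Metric.dist_le_diam_of_mem (hbdd _) h1 (ux _ x))
          (hN _ (le_max_left _ _) _ (uA _ x))
      exact ⟨f w, zanti (le_max_right N i) hpz, by rw [dist_comm]; exact hδε w hwx⟩
    have : H (f x) = z :=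
      Subtype.ext (funext fun i => uniq i (f x) _ (z.2.1 i) (hfx i))
    exact this.symm
  · intro hz i
    refine ⟨f x, ⟨x, ?_, rfl⟩, ?_⟩
    · rw [hy i]; exact ux i x
    · rw [hz]; exact ux i (f x)
end
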